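/- Let z1, z2 be integers represented in two's complement with l bits, given as bit functions b1, b2 : Fin l → Bool (bit i is the coefficient of 2^i, with bit l-1 the sign bit). Define t2 by the fold: start with t2 := true, and for i = 0 to l-2 update t2 := if b1 i = b2 i then t2 else b2 i. Define r := if b1 (l-1) = b2 (l-1) then t2 else b1 (l-1). Then r = true if and only if z1 ≤ z2. -/

import Mathlib

/-- Two's complement value of an `l`-bit string. -/
def twoC (l : ℕ) (h : 0 < l) (b : Fin l → Bool) : ℤ :=
  (∑ i : Fin l, if (i : ℕ) < l - 1 then ((b i).toNat : ℤ) * 2 ^ (i : ℕ) else 0)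
    - (if b ⟨l - 1, Nat.sub_lt h one_pos⟩ then 2 ^ (l - 1) else 0)

/-- The MUX-chain fold over the lower `l-1` bits, from least significant upward. -/
def muxFold (l : ℕ) (b1 b2 : Fin l → Bool) (init : Bool) : Bool :=
  (List.finRange l).foldl
    (fun t (i : Fin l) => if (i : ℕ) < l - 1 then (if b1 i = b2 i then t else b2 i) else t) init

private def S (a : ℕ → Bool) (n : ℕ) : ℕ := ∑ i ∈ Finset.range n, (a i).toNat * 2 ^ i

private lemma S_lt (a : ℕ → Bool) (n : ℕ) : S a n < 2 ^ n := by
  induction n with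
  | zero => simp [S]
  | succ n ih =>
    have hs : S a (n+1) = S a n + (a n).toNat * 2 ^ n := by
      simp [S, Finset.sum_range_succ]
    rw [hs, pow_succ]
    have : (a n).toNat ≤ 1 := Bool.toNat_le _
    nlinarith

private lemma fold_eq (a c : ℕ → Bool) (n : ℕ) :
    (List.range n).foldl (fun t i => if a i = c i then t else c i) true
      = decide (S a n ≤ S c n) := by
  induction n with
  | zero => simp [S]
  | succ n ih =>
    rw [List.range_succ, List.foldl_append, ih]
    have hS1 : S a (n+1) = S a n + (a n).toNat * 2 ^ n := by simp [S, Finset.sum_range_succ]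
    have hS2 : S c (n+1) = S c n + (c n).toNat * 2 ^ n := by simp [S, Finset.sum_range_succ]
    have h1 := S_lt a n
    have h2 := S_lt c n
    simp only [List.foldl_cons, List.foldl_nil]
    cases han : a n <;> cases hcn : c n <;>
      simp only [hS1, hS2, han, hcn, Bool.toNat_true, Bool.toNat_false, one_mul, zero_mul,
        add_zero] <;>
      simp <;> omega

theorem stmt0 (l : ℕ) (h : 0 < l) (b1 b2 : Fin l → Bool)
    (t2 : Bool) (ht2 : t2 = muxFold l b1 b2 true)
    (r : Bool)
    (hr : r = if b1 ⟨l - 1, Nat.sub_lt h one_pos⟩ = b2 ⟨l - 1, Nat.sub_lt h one_pos⟩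
              then t2 else b1 ⟨l - 1, Nat.sub_lt h one_pos⟩) :
    r = true ↔ twoC l h b1 ≤ twoC l h b2 := by
  obtain ⟨n, rfl⟩ : ∃ n, l = n + 1 := ⟨l - 1, (Nat.succ_pred_eq_of_pos h).symm⟩
  have hn : n + 1 - 1 = n := rfl
  set a : ℕ → Bool := fun j => if hj : j < n + 1 then b1 ⟨j, hj⟩ else false with ha
  set c : ℕ → Bool := fun j => if hj : j < n + 1 then b2 ⟨j, hj⟩ else false with hc
  have hab : ∀ i : Fin (n+1), b1 i = a i := by intro i; simp [ha, i.isLt, Nat.lt_succ_iff.mp i.isLt]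
  have hcb : ∀ i : Fin (n+1), b2 i = c i := by intro i; simp [hc, i.isLt, Nat.lt_succ_iff.mp i.isLt]
  -- muxFold equals fold over range
  have hmux : muxFold (n+1) b1 b2 true
      = (List.range n).foldl (fun t j => if a j = c j then t else c j) true := by
    have e1 : muxFold (n+1) b1 b2 true
        = (List.range (n+1)).foldl
            (fun t j => if j < n then (if a j = c j then t else c j) else t) true := by
      unfold muxFold
      rw [← (show (List.finRange (n+1)).map (fun i : Fin (n+1) => (i : ℕ)) = List.range (n+1) from
        List.ext_getElem (by simp) (by simp)), List.foldl_map]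
      congr 1
      funext t i
      rw [hab, hcb, hn]
    rw [e1, List.range_succ, List.foldl_append]
    simp only [List.foldl_cons, List.foldl_nil, if_neg (lt_irrefl n)]
    have key : ∀ m, m ≤ n → (List.range m).foldl
        (fun t j => if j < n then (if a j = c j then t else c j) else t) true
        = (List.range m).foldl (fun t j => if a j = c j then t else c j) true := by
      intro m hm
      induction m with
      | zero => rfl
      | succ m ih =>
        rw [List.range_succ, List.foldl_append, List.foldl_append,
          ih (Nat.le_of_succ_le hm)]
        simp [Nat.lt_of_succ_le hm]
    exact key n le_rfl
  have ht2' : t2 = decide (S a n ≤ S c n) := by rw [ht2, hmux, fold_eq]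
  -- twoC equals S minus sign
  have htc : ∀ (b : Fin (n+1) → Bool) (d : ℕ → Bool),
      (∀ i : Fin (n+1), b i = d i) →
      twoC (n+1) h b = (S d n : ℤ) - (if b ⟨n, Nat.lt_succ_self n⟩ then 2 ^ n else 0) := by
    intro b d hbd
    unfold twoC
    simp only [hn]
    have he : (∑ i : Fin (n+1), if (i : ℕ) < n then ((b i).toNat : ℤ) * 2 ^ (i : ℕ) else 0)
        = ∑ j ∈ Finset.range (n+1),
            (fun j => if j < n then ((d j).toNat : ℤ) * 2 ^ j else 0) j := by
      rw [← Fin.sum_univ_eq_sum_range]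
      exact Finset.sum_congr rfl (fun i _ => by rw [hbd])
    rw [he, Finset.sum_range_succ, if_neg (lt_irrefl n), add_zero]
    congr 1
    unfold S
    push_cast
    exact Finset.sum_congr rfl (fun j hj => by rw [if_pos (Finset.mem_range.mp hj)])
  have hmk : (⟨n + 1 - 1, Nat.sub_lt h one_pos⟩ : Fin (n+1)) = ⟨n, Nat.lt_succ_self n⟩ := rfl
  rw [htc b1 a hab, htc b2 c hcb, hr, ht2', hmk]
  have hS1' : (S a n : ℤ) < 2 ^ n := by exact_mod_cast S_lt a n
  have hS2' : (S c n : ℤ) < 2 ^ n := by exact_mod_cast S_lt c n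
  have hS1p : (0:ℤ) ≤ (S a n : ℤ) := Int.natCast_nonneg _
  have hS2p : (0:ℤ) ≤ (S c n : ℤ) := Int.natCast_nonneg _
  cases hb1 : b1 ⟨n, Nat.lt_succ_self n⟩ <;> cases hb2 : b2 ⟨n, Nat.lt_succ_self n⟩
  · -- both false
    simp only [eq_self_iff_true, Bool.false_eq_true, if_pos trivial, if_neg not_false,
      decide_eq_true_eq, sub_zero]
    exact Nat.cast_le.symm
  · -- b1 false, b2 true
    simp only [Bool.false_eq_true, eq_self_iff_true, if_neg not_false, if_pos trivial, sub_zero]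
    constructor
    · intro hh; exact hh.elim
    · intro hh; exfalso; linarith
  · -- b1 true, b2 false
    have hif : (if (false:Bool) = true then (2:ℤ)^n else 0) = 0 := by simp
    simp only [Bool.true_eq_false, eq_self_iff_true, if_neg not_false, if_pos trivial, hif,
      sub_zero]
    constructor
    · intro _; linarith
    · intro _; trivial
  · -- both true
    simp only [eq_self_iff_true, if_pos trivial, decide_eq_true_eq]
    rw [sub_le_sub_iff_right]
    exact Nat.cast_le.symm
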